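/- In the DFA A obtained by the subset construction from the concatenation NFA A_1·A_2 of the two-letter Brzozowski pair, every valid state (p_i, S), i.e. every subset {p_i} ∪ {q_j : j ∈ S} with 0 ≤ i ≤ m−1, S ⊆ {0,…,n−1}, and q_0 ∈ S whenever i = m−1, is accessible from the initial state of A. -/

import Mathlib

/-- The concatenation NFA `A·B` of two NFAs with disjoint state sets (modelled by the
sum type `σ₁ ⊕ σ₂`): its states are `Q_A ∪ Q_B`, its final states are `F_B`,
its initial states are `I_A` if `I_A ∩ F_A = ∅` and `I_A ∪ I_B` otherwise, and its
transitions are: for `q ∈ Q_B`, `δ(q,x) = δ_B(q,x)`; for `q ∈ Q_A`,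
`δ(q,x) = δ_A(q,x)` if `δ_A(q,x) ∩ F_A = ∅`, and `δ(q,x) = δ_A(q,x) ∪ I_B` otherwise. -/
def nfaConcat {Sig σ₁ σ₂ : Type*} (A : NFA Sig σ₁) (B : NFA Sig σ₂) :
    NFA Sig (σ₁ ⊕ σ₂) where
  step q a :=
    match q with
    | Sum.inl q =>
        Sum.inl '' A.step q a ∪
          {x | (A.step q a ∩ A.accept).Nonempty ∧ x ∈ Sum.inr '' B.start}
    | Sum.inr q => Sum.inr '' B.step q a
  start :=
    Sum.inl '' A.start ∪ {x | (A.start ∩ A.accept).Nonempty ∧ x ∈ Sum.inr '' B.start}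
  accept := Sum.inr '' B.accept

/-- The first DFA of the two-letter Brzozowski pair: states `p_0,…,p_{m−1}`, initial
state `p_0`, unique final state `p_{m−1}`; the letter `a` (encoded `0 : Fin 2`) acts as
the cyclic permutation `p_i ↦ p_{(i+1) mod m}` and `b` (encoded `1`) acts as the
transposition exchanging `p_0` and `p_1`. -/
def dfaW1 (m : ℕ) (h : 0 < m) : DFA (Fin 2) (Fin m) where
  step i x :=
    if x = 0 then ⟨(i.val + 1) % m, Nat.mod_lt _ h⟩
    else ⟨(if i.val = 0 then 1 else if i.val = 1 then 0 else i.val) % m, Nat.mod_lt _ h⟩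
  start := ⟨0, h⟩
  accept := {⟨m - 1, by omega⟩}

/-- The second DFA of the two-letter Brzozowski pair: states `q_0,…,q_{n−1}`, initial
state `q_0`, unique final state `q_{n−1}`; the letter `a` acts as the cyclic permutation
`q_j ↦ q_{(j+1) mod n}` and `b` acts as the contraction sending `q_1` to `q_0` and
fixing all other states. -/
def dfaW2 (n : ℕ) (h : 0 < n) : DFA (Fin 2) (Fin n) where
  step j x :=
    if x = 0 then ⟨(j.val + 1) % n, Nat.mod_lt _ h⟩
    else ⟨(if j.val = 1 then 0 else j.val) % n, Nat.mod_lt _ h⟩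
  start := ⟨0, h⟩
  accept := {⟨n - 1, by omega⟩}

namespace TwoLetterAux
open scoped Fin.NatCast Fin.CommRing

open Set List

/-- shift a subset of `Fin n` by `d`. -/
def sh (n : ℕ) (d : Fin n) (S : Set (Fin n)) : Set (Fin n) := (fun x => x + d) '' S

lemma sh_sh (n : ℕ) (d e : Fin n) (S : Set (Fin n)) : sh n e (sh n d S) = sh n (d + e) S := by
  unfold sh
  rw [Set.image_image]
  apply Set.image_congr'
  intro x
  rw [add_assoc]

lemma sh_zero (n : ℕ) [NeZero n] (S : Set (Fin n)) : sh n 0 S = S := by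
  unfold sh
  simpa using Set.image_id S

lemma ncard_sh (n : ℕ) (d : Fin n) (S : Set (Fin n)) : (sh n d S).ncard = S.ncard :=
  Set.ncard_image_of_injective _ (add_left_injective d)

lemma sh_cancel (n : ℕ) [NeZero n] (d : Fin n) (S : Set (Fin n)) :
    sh n d (sh n (-d) S) = S := by
  rw [sh_sh, neg_add_cancel, sh_zero]

lemma mem_sh (n : ℕ) [NeZero n] (d : Fin n) (S : Set (Fin n)) (y : Fin n) :
    y ∈ sh n d S ↔ y - d ∈ S := by
  constructor
  · rintro ⟨x, hx, rfl⟩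
    simpa using hx
  · intro h
    exact ⟨y - d, h, by ring⟩

/-- the pair automaton step. -/
def P (m n : ℕ) (hm : 0 < m) (hn : 0 < n) (p : Fin m × Set (Fin n)) (x : Fin 2) :
    Fin m × Set (Fin n) :=
  ((dfaW1 m hm).step p.1 x,
    (fun j => (dfaW2 n hn).step j x) '' p.2 ∪
      (if (dfaW1 m hm).step p.1 x = ⟨m - 1, by omega⟩ then {⟨0, hn⟩} else ∅))

lemma step2_a (n : ℕ) [NeZero n] (hn : 3 ≤ n) (j : Fin n) :
    (dfaW2 n (by omega)).step j 0 = j + 1 := by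
  show (⟨(j.val + 1) % n, _⟩ : Fin n) = j + 1
  apply Fin.ext
  rw [Fin.add_def, Fin.val_one', Nat.mod_eq_of_lt (a := 1) (by omega)]

lemma image2_a (n : ℕ) [NeZero n] (hn : 3 ≤ n) (S : Set (Fin n)) :
    (fun j => (dfaW2 n (by omega)).step j 0) '' S = sh n 1 S := by
  apply Set.image_congr'
  intro x
  exact step2_a n hn x

lemma step2_b (n : ℕ) [NeZero n] (hn : 3 ≤ n) (j : Fin n) (h : j ≠ 1) :
    (dfaW2 n (by omega)).step j 1 = j := by
  show (⟨(if j.val = 1 then 0 else j.val) % n, _⟩ : Fin n) = j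
  have hv : j.val ≠ 1 := by
    intro hv
    apply h
    apply Fin.ext
    rw [hv, Fin.val_one', Nat.mod_eq_of_lt (a := 1) (by omega)]
  apply Fin.ext
  show (if j.val = 1 then 0 else j.val) % n = j.val
  rw [if_neg hv, Nat.mod_eq_of_lt j.isLt]

lemma image2_b (n : ℕ) [NeZero n] (hn : 3 ≤ n) (S : Set (Fin n)) (h : (1 : Fin n) ∉ S) :
    (fun j => (dfaW2 n (by omega)).step j 1) '' S = S := by
  have : ∀ x ∈ S, (dfaW2 n (by omega : 0 < n)).step x 1 = id x := by
    intro x hx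
    exact step2_b n hn x (fun he => h (he ▸ hx))
  rw [Set.image_congr this, Set.image_id]

lemma pos3 {k : ℕ} (h : 3 ≤ k) : 0 < k := by omega

lemma P_a_mid (m n : ℕ) [NeZero n] (hm : 3 ≤ m) (hn : 3 ≤ n) (i : Fin m)
    (h : i.val + 1 < m - 1) (S : Set (Fin n)) :
    P m n (pos3 hm) (pos3 hn) (i, S) 0 = (⟨i.val + 1, by omega⟩, sh n 1 S) := by
  unfold P
  dsimp only
  have h1 : (dfaW1 m (pos3 hm)).step i 0 = (⟨i.val + 1, by omega⟩ : Fin m) := by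
    show (⟨(i.val + 1) % m, _⟩ : Fin m) = _
    apply Fin.ext
    exact Nat.mod_eq_of_lt (by omega)
  rw [h1, if_neg (by simp only [ne_eq, Fin.mk.injEq]; omega), Set.union_empty, image2_a n hn]

lemma P_a_last (m n : ℕ) [NeZero n] (hm : 3 ≤ m) (hn : 3 ≤ n) (S : Set (Fin n)) :
    P m n (pos3 hm) (pos3 hn) ((⟨m - 2, by omega⟩ : Fin m), S) 0 =
      ((⟨m - 1, by omega⟩ : Fin m), sh n 1 S ∪ {0}) := by
  unfold P
  dsimp only
  have h1 : (dfaW1 m (pos3 hm)).step ⟨m - 2, by omega⟩ 0 =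
      (⟨m - 1, by omega⟩ : Fin m) := by
    show (⟨(m - 2 + 1) % m, _⟩ : Fin m) = _
    apply Fin.ext
    show (m - 2 + 1) % m = m - 1
    rw [Nat.mod_eq_of_lt (by omega)]
    omega
  rw [h1, if_pos rfl, image2_a n hn]
  have h0 : (⟨0, pos3 hn⟩ : Fin n) = 0 := by
    apply Fin.ext
    simp
  rw [h0]

lemma P_a_wrap (m n : ℕ) [NeZero n] (hm : 3 ≤ m) (hn : 3 ≤ n) (S : Set (Fin n)) :
    P m n (pos3 hm) (pos3 hn) ((⟨m - 1, by omega⟩ : Fin m), S) 0 =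
      ((⟨0, pos3 hm⟩ : Fin m), sh n 1 S) := by
  unfold P
  dsimp only
  have h1 : (dfaW1 m (pos3 hm)).step ⟨m - 1, by omega⟩ 0 =
      (⟨0, pos3 hm⟩ : Fin m) := by
    show (⟨(m - 1 + 1) % m, _⟩ : Fin m) = _
    apply Fin.ext
    show (m - 1 + 1) % m = 0
    have h2 : m - 1 + 1 = m := by omega
    rw [h2, Nat.mod_self]
  rw [h1, if_neg (by simp only [ne_eq, Fin.mk.injEq]; omega), Set.union_empty, image2_a n hn]

lemma P_b_one (m n : ℕ) [NeZero n] (hm : 3 ≤ m) (hn : 3 ≤ n) (S : Set (Fin n))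
    (h : (1 : Fin n) ∉ S) :
    P m n (pos3 hm) (pos3 hn) ((⟨1, by omega⟩ : Fin m), S) 1 =
      ((⟨0, pos3 hm⟩ : Fin m), S) := by
  unfold P
  dsimp only
  have h1 : (dfaW1 m (pos3 hm)).step ⟨1, by omega⟩ 1 = (⟨0, pos3 hm⟩ : Fin m) := by
    show (⟨(if (1 : ℕ) = 0 then 1 else if (1 : ℕ) = 1 then 0 else 1) % m, _⟩ : Fin m) = _
    apply Fin.ext
    norm_num
  rw [h1, if_neg (by simp only [ne_eq, Fin.mk.injEq]; omega), Set.union_empty, image2_b n hn S h]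

end TwoLetterAux
namespace TwoLetterAux
open scoped Fin.NatCast Fin.CommRing

lemma runA (m n : ℕ) [NeZero n] (hm : 3 ≤ m) (hn : 3 ≤ n) :
    ∀ c : ℕ, ∀ hc : c ≤ m - 2, ∀ W : Set (Fin n),
      List.foldl (P m n (pos3 hm) (pos3 hn)) ((⟨0, pos3 hm⟩ : Fin m), W)
          (List.replicate c (0 : Fin 2)) = (⟨c, by omega⟩, sh n (c : Fin n) W) := by
  intro c
  induction c with
  | zero =>
    intro _ W
    simp only [List.replicate, List.foldl_nil, Nat.cast_zero, sh_zero]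
  | succ c ih =>
    intro hc W
    rw [List.replicate_succ', List.foldl_append, ih (by omega) W]
    simp only [List.foldl_cons, List.foldl_nil]
    rw [P_a_mid m n hm hn ⟨c, by omega⟩ (by show c + 1 < m - 1; omega) _]
    rw [sh_sh]
    congr 1
    push_cast
    ring

def wloop : ℕ → List (Fin 2)
  | 0 => []
  | t + 1 => 0 :: 1 :: wloop t

lemma runLoop (m n : ℕ) [NeZero n] (hm : 3 ≤ m) (hn : 3 ≤ n) :
    ∀ t : ℕ, ∀ W : Set (Fin n), (∀ r, r < t → (0 : Fin n) ∉ sh n (r : Fin n) W) →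
      List.foldl (P m n (pos3 hm) (pos3 hn)) ((⟨0, pos3 hm⟩ : Fin m), W) (wloop t) =
        (⟨0, pos3 hm⟩, sh n (t : Fin n) W) := by
  intro t
  induction t with
  | zero =>
    intro W _
    simp only [wloop, List.foldl_nil, Nat.cast_zero, sh_zero]
  | succ t ih =>
    intro W h
    show List.foldl _ _ (0 :: 1 :: wloop t) = _
    simp only [List.foldl_cons]
    rw [P_a_mid m n hm hn ⟨0, by omega⟩ (by show 0 + 1 < m - 1; omega) W]
    rw [P_b_one m n hm hn (sh n 1 W) (by
      intro h1
      apply h 0 (by omega)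
      rw [Nat.cast_zero, sh_zero]
      obtain ⟨x, hx, he⟩ := h1
      have hx0 : x = 0 := by
        have he' : x + 1 = 1 := he
        have h2 : x + 1 = 0 + 1 := by rw [zero_add]; exact he'
        exact add_right_cancel h2
      exact hx0 ▸ hx)]
    rw [ih (sh n 1 W) (by
      intro r hr
      rw [sh_sh]
      have : (1 : Fin n) + (r : Fin n) = ((r + 1 : ℕ) : Fin n) := by push_cast; ring
      rw [this]
      exact h (r + 1) (by omega))]
    rw [sh_sh]
    congr 1
    push_cast
    ring

end TwoLetterAux
namespace TwoLetterAux
open scoped Fin.NatCast Fin.CommRing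

def Reach (m n : ℕ) (hm : 0 < m) (hn : 0 < n) (p : Fin m × Set (Fin n)) : Prop :=
  ∃ w : List (Fin 2), List.foldl (P m n hm hn) ((⟨0, hm⟩ : Fin m), (∅ : Set (Fin n))) w = p

lemma reach_extend (m n : ℕ) (hm : 0 < m) (hn : 0 < n) (p : Fin m × Set (Fin n))
    (hp : Reach m n hm hn p) (w : List (Fin 2)) :
    Reach m n hm hn (List.foldl (P m n hm hn) p w) := by
  obtain ⟨w0, h0⟩ := hp
  exact ⟨w0 ++ w, by rw [List.foldl_append, h0]⟩

lemma main (m n : ℕ) [NeZero n] (hm : 3 ≤ m) (hn : 3 ≤ n) :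
    ∀ k : ℕ, ∀ i : Fin m, ∀ S : Set (Fin n), S.ncard = k →
      (i.val = m - 1 → (0 : Fin n) ∈ S) →
      Reach m n (pos3 hm) (pos3 hn) (i, S) := by
  classical
  intro k
  induction k with
  | zero =>
    intro i S hcard hval
    have hS : S = ∅ := by rwa [Set.ncard_eq_zero] at hcard
    subst hS
    by_cases hi : i.val = m - 1
    · exact absurd (hval hi) (Set.notMem_empty _)
    · refine ⟨List.replicate i.val 0, ?_⟩
      rw [runA m n hm hn i.val (by omega) ∅]
      have : sh n (i.val : Fin n) ∅ = ∅ := by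
        unfold sh; exact Set.image_empty _
      rw [this]
  | succ k ih =>
    intro i S hcard hval
    by_cases hi : i.val = m - 1
    · -- last state: predecessor (m-2, (S \ {0}) shifted by -1) via one a
      have h0S : (0 : Fin n) ∈ S := hval hi
      set T := sh n (-1) (S \ {0}) with hT
      have hTcard : T.ncard = k := by
        rw [hT, ncard_sh, Set.ncard_diff_singleton_of_mem h0S]
        omega
      have hre := ih ⟨m - 2, by omega⟩ T hTcard (by intro hh; exfalso; simp at hh; omega)
      have := reach_extend m n (pos3 hm) (pos3 hn) _ hre [0]
      simp only [List.foldl_cons, List.foldl_nil] at this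
      rw [P_a_last m n hm hn T] at this
      have hs1 : sh n 1 T ∪ {0} = S := by
        rw [hT, sh_cancel]
        rw [Set.diff_union_of_subset (by simpa using h0S)]
      rw [hs1] at this
      have hieq : (⟨m - 1, by omega⟩ : Fin m) = i := Fin.ext (by simp [hi])
      rwa [hieq] at this
    · -- middle state
      have hiv : i.val ≤ m - 2 := by have := i.isLt; omega
      have hne : S.Nonempty := by
        apply Set.nonempty_of_ncard_ne_zero
        omega
      obtain ⟨s₀, hs₀⟩ := hne
      set c : Fin n := ((i.val + 1 : ℕ) : Fin n) with hc
      have hD : ∃ j : ℕ, c + (j : Fin n) ∈ S := by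
        refine ⟨(s₀ - c).val, ?_⟩
        rw [Fin.cast_val_eq_self]
        have : c + (s₀ - c) = s₀ := by ring
        rw [this]
        exact hs₀
      set t := Nat.find hD with htdef
      have htS : c + (t : Fin n) ∈ S := Nat.find_spec hD
      have hmin : ∀ j, j < t → c + (j : Fin n) ∉ S := fun j hj => Nat.find_min hD hj
      set σc : Fin n := c + (t : Fin n) with hσ
      set U := sh n (-σc) S with hU
      have hU0 : (0 : Fin n) ∈ U := by
        rw [hU]
        exact ⟨σc, htS, by ring⟩
      set T := sh n (-1) (U \ {0}) with hT
      have hUcard : U.ncard = k + 1 := by rw [hU, ncard_sh]; exact hcard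
      have hTcard : T.ncard = k := by
        rw [hT, ncard_sh, Set.ncard_diff_singleton_of_mem hU0]
        omega
      have hre := ih ⟨m - 2, by omega⟩ T hTcard (by intro hh; exfalso; simp at hh; omega)
      have hrun := reach_extend m n (pos3 hm) (pos3 hn) _ hre
        (0 :: 0 :: (wloop t ++ List.replicate i.val 0))
      simp only [List.foldl_cons] at hrun
      rw [P_a_last m n hm hn T] at hrun
      have hs1 : sh n 1 T ∪ {0} = U := by
        rw [hT, sh_cancel, Set.diff_union_of_subset (by simpa using hU0)]
      rw [hs1] at hrun
      rw [P_a_wrap m n hm hn U] at hrun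
      rw [List.foldl_append] at hrun
      rw [runLoop m n hm hn t (sh n 1 U) (by
        intro r hr hmem
        rw [sh_sh] at hmem
        obtain ⟨x, hxU, hxe⟩ := hmem
        have hxe' : x + (1 + (r : Fin n)) = 0 := hxe
        rw [hU, mem_sh] at hxU
        -- the element x + σc of S equals c + (t - 1 - r)
        have hj : x - -σc = c + ((t - 1 - r : ℕ) : Fin n) := by
          have h1 : x = -(1 + (r : Fin n)) := by
            have := hxe'
            linear_combination this
          have h2 : ((t - 1 - r : ℕ) : Fin n) = (t : Fin n) - 1 - (r : Fin n) := by
            have htr : t = (t - 1 - r) + r + 1 := by omega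
            rw [htr]
            have h3 : t - 1 - r + r + 1 - 1 - r = t - 1 - r := by omega
            rw [h3]
            push_cast
            ring
          rw [h1, h2, hσ]
          ring
        rw [hj] at hxU
        exact hmin (t - 1 - r) (by omega) hxU)] at hrun
      rw [runA m n hm hn i.val hiv _] at hrun
      have hfin : sh n (i.val : Fin n) (sh n (t : Fin n) (sh n 1 U)) = S := by
        rw [sh_sh, sh_sh, hU]
        have : (1 : Fin n) + ((t : Fin n) + (i.val : Fin n)) = σc := by
          rw [hσ, hc]
          push_cast
          ring
        rw [this, sh_cancel]
      rw [hfin] at hrun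
      have hieq : (⟨i.val, by omega⟩ : Fin m) = i := Fin.ext rfl
      rwa [hieq] at hrun

end TwoLetterAux
namespace TwoLetterAux
open scoped Fin.NatCast Fin.CommRing

def good (m n : ℕ) (i : Fin m) (S : Set (Fin n)) : Set (Fin m ⊕ Fin n) :=
  {Sum.inl i} ∪ Sum.inr '' S

lemma nfaConcat_step_inl {Sig σ₁ σ₂ : Type*} (A : NFA Sig σ₁) (B : NFA Sig σ₂)
    (q : σ₁) (a : Sig) :
    (nfaConcat A B).step (Sum.inl q) a =
      Sum.inl '' A.step q a ∪
        {x | (A.step q a ∩ A.accept).Nonempty ∧ x ∈ Sum.inr '' B.start} := rfl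

lemma nfaConcat_step_inr {Sig σ₁ σ₂ : Type*} (A : NFA Sig σ₁) (B : NFA Sig σ₂)
    (q : σ₂) (a : Sig) :
    (nfaConcat A B).step (Sum.inr q) a = Sum.inr '' B.step q a := rfl

lemma stepSet_good (m n : ℕ) (hm : 3 ≤ m) (hn : 3 ≤ n) (i : Fin m) (S : Set (Fin n))
    (x : Fin 2) :
    (nfaConcat (dfaW1 m (pos3 hm)).toNFA (dfaW2 n (pos3 hn)).toNFA).stepSet
        (good m n i S) x =
      good m n (P m n (pos3 hm) (pos3 hn) (i, S) x).1
        (P m n (pos3 hm) (pos3 hn) (i, S) x).2 := by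
  set d := (dfaW1 m (pos3 hm)).step i x with hd
  ext y
  rw [NFA.mem_stepSet]
  constructor
  · rintro ⟨s, hs, hy⟩
    simp only [good, Set.mem_union, Set.mem_singleton_iff, Set.mem_image] at hs
    rcases hs with rfl | ⟨j, hjS, rfl⟩
    · have h2 : y = Sum.inl d ∨ (d ∈ (dfaW1 m (pos3 hm)).accept ∧
          y = Sum.inr (dfaW2 n (pos3 hn)).start) := by
        rw [nfaConcat_step_inl] at hy
        simpa only [DFA.toNFA_step, DFA.toNFA_accept, DFA.toNFA_start, Set.image_singleton,
          Set.mem_union, Set.mem_singleton_iff, Set.mem_setOf_eq,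
          Set.singleton_inter_nonempty] using hy
      simp only [good, P, Set.mem_union, Set.mem_singleton_iff, Set.mem_image]
      rcases h2 with rfl | ⟨hacc, rfl⟩
      · exact Or.inl rfl
      · refine Or.inr ⟨⟨0, pos3 hn⟩, Or.inr ?_, rfl⟩
        have hdm : d = (⟨m - 1, by omega⟩ : Fin m) := by
          have : d ∈ ({⟨m - 1, by omega⟩} : Set (Fin m)) := hacc
          simpa using this
        rw [← hd, if_pos hdm]
        rfl
    · have h2 : y = Sum.inr ((dfaW2 n (pos3 hn)).step j x) := by
        rw [nfaConcat_step_inr] at hy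
        simpa only [DFA.toNFA_step, Set.image_singleton, Set.mem_singleton_iff] using hy
      subst h2
      simp only [good, P, Set.mem_union, Set.mem_singleton_iff, Set.mem_image]
      exact Or.inr ⟨_, Or.inl ⟨j, hjS, rfl⟩, rfl⟩
  · intro hy
    simp only [good, P, Set.mem_union, Set.mem_singleton_iff, Set.mem_image] at hy
    rcases hy with rfl | ⟨q, hq, rfl⟩
    · refine ⟨Sum.inl i, Or.inl rfl, ?_⟩
      rw [nfaConcat_step_inl]
      exact Or.inl ⟨d, rfl, rfl⟩
    · rcases hq with ⟨j, hjS, rfl⟩ | hq0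
      · refine ⟨Sum.inr j, Or.inr ⟨j, hjS, rfl⟩, ?_⟩
        rw [nfaConcat_step_inr]
        exact ⟨_, rfl, rfl⟩
      · by_cases hdm : d = (⟨m - 1, by omega⟩ : Fin m)
        · rw [← hd, if_pos hdm] at hq0
          have hq0' : q = (⟨0, pos3 hn⟩ : Fin n) := hq0
          subst hq0'
          refine ⟨Sum.inl i, Or.inl rfl, ?_⟩
          rw [nfaConcat_step_inl]
          refine Or.inr ⟨⟨d, rfl, ?_⟩, ⟨⟨0, pos3 hn⟩, rfl, rfl⟩⟩
          show d ∈ ({⟨m - 1, by omega⟩} : Set (Fin m))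
          simp [hdm]
        · rw [← hd, if_neg hdm] at hq0
          exact absurd hq0 (Set.notMem_empty _)

lemma evalFrom_good (m n : ℕ) (hm : 3 ≤ m) (hn : 3 ≤ n) :
    ∀ (w : List (Fin 2)) (p : Fin m × Set (Fin n)),
      (nfaConcat (dfaW1 m (pos3 hm)).toNFA (dfaW2 n (pos3 hn)).toNFA).toDFA.evalFrom
          (good m n p.1 p.2) w =
        good m n (List.foldl (P m n (pos3 hm) (pos3 hn)) p w).1
          (List.foldl (P m n (pos3 hm) (pos3 hn)) p w).2 := by
  intro w
  induction w with
  | nil => intro p; rfl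
  | cons a w ih =>
    intro p
    show (nfaConcat _ _).toDFA.evalFrom ((nfaConcat _ _).toDFA.step (good m n p.1 p.2) a) w = _
    have hstep : (nfaConcat (dfaW1 m (pos3 hm)).toNFA
        (dfaW2 n (pos3 hn)).toNFA).toDFA.step (good m n p.1 p.2) a =
        good m n (P m n (pos3 hm) (pos3 hn) p a).1 (P m n (pos3 hm) (pos3 hn) p a).2 := by
      have := stepSet_good m n hm hn p.1 p.2 a
      exact this
    rw [hstep, ih (P m n (pos3 hm) (pos3 hn) p a)]
    rfl

lemma start_good (m n : ℕ) (hm : 3 ≤ m) (hn : 3 ≤ n) :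
    (nfaConcat (dfaW1 m (pos3 hm)).toNFA (dfaW2 n (pos3 hn)).toNFA).toDFA.start =
      good m n (⟨0, pos3 hm⟩ : Fin m) (∅ : Set (Fin n)) := by
  show Sum.inl '' _ ∪ _ = _
  ext y
  simp only [good, Set.image_empty, Set.union_empty, DFA.toNFA_start, DFA.toNFA_accept,
    Set.image_singleton, Set.mem_union, Set.mem_singleton_iff, Set.mem_setOf_eq,
    Set.singleton_inter_nonempty]
  constructor
  · rintro (rfl | ⟨hacc, hy⟩)
    · rfl
    · exfalso
      have : ((⟨0, pos3 hm⟩ : Fin m) : Fin m) ∈ ({⟨m - 1, by omega⟩} : Set (Fin m)) := hacc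
      simp only [Set.mem_singleton_iff, Fin.mk.injEq] at this
      omega
  · rintro rfl
    exact Or.inl rfl

end TwoLetterAux


/-- In the DFA obtained by the subset construction from the concatenation NFA `A_1·A_2`
of the two-letter Brzozowski pair, every valid state `(p_i, S)` — i.e. every subset
`{p_i} ∪ {q_j : j ∈ S}` with `q_0 ∈ S` whenever `i = m−1` — is accessible from the
initial state. -/
theorem two_letter_valid_states_accessible (m n : ℕ) (hm : 3 ≤ m) (hn : 3 ≤ n)
    (i : Fin m) (S : Set (Fin n)) (hvalid : i.val = m - 1 → (⟨0, by omega⟩ : Fin n) ∈ S) :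
    ∃ w : List (Fin 2),
      (nfaConcat (dfaW1 m (by omega)).toNFA (dfaW2 n (by omega)).toNFA).toDFA.eval w =
        {Sum.inl i} ∪ Sum.inr '' S := by
  haveI : NeZero n := ⟨by omega⟩
  obtain ⟨w, hw⟩ := TwoLetterAux.main m n hm hn S.ncard i S rfl (by
    intro h
    have h2 := hvalid h
    have h3 : (⟨0, by omega⟩ : Fin n) = 0 := Fin.ext (by simp)
    rwa [h3] at h2)
  refine ⟨w, ?_⟩
  show (nfaConcat _ _).toDFA.evalFrom _ w = _
  rw [TwoLetterAux.start_good m n hm hn, TwoLetterAux.evalFrom_good m n hm hn w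
    ((⟨0, by omega⟩ : Fin m), (∅ : Set (Fin n))), hw]
  rfl
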